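/- arXiv:2308.15838 — 2 statements merged into one kernel-verified Lean document; each statement's English description precedes it below -/
import Mathlib

section
/- Let λ, η, v, w > 0 with λv ≠ ηw, and β̃ ∈ ℝ. Then ∫_ℝ exp(−λv|β| − ηw|β − β̃|) dβ = (2λv/((λv)² − (ηw)²))·exp(−ηw|β̃|) − (2ηw/((λv)² − (ηw)²))·exp(−λv|β̃|). -/
open MeasureTheory Set Real

lemma intOn_exp_Iic {c : ℝ} (hc : 0 < c) (d : ℝ) :
    IntegrableOn (fun x : ℝ => Real.exp (c * x)) (Iic d) := by
  have h := exp_neg_integrableOn_Ioi (-d) hc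
  rw [← Measure.map_neg_eq_self (volume : Measure ℝ)]
  have m : MeasurableEmbedding fun x : ℝ => -x := (Homeomorph.neg ℝ).measurableEmbedding
  rw [m.integrableOn_map_iff]
  simp_rw [Function.comp_def, neg_preimage, neg_Iic]
  rw [integrableOn_Ici_iff_integrableOn_Ioi]
  refine h.congr_fun (fun x _ => by ring_nf) measurableSet_Ioi

lemma int_exp_Ioi {c : ℝ} (hc : 0 < c) (d : ℝ) :
    ∫ x in Ioi d, Real.exp (-(c * x)) = Real.exp (-(c * d)) / c := by
  have := MeasureTheory.integral_comp_mul_left_Ioi (fun x => Real.exp (-x)) d hc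
  simp only [integral_exp_neg_Ioi, smul_eq_mul] at this
  rw [this, inv_mul_eq_div]

lemma int_exp_Iic {c : ℝ} (hc : 0 < c) (d : ℝ) :
    ∫ x in Iic d, Real.exp (c * x) = Real.exp (c * d) / c := by
  have h : ∀ x : ℝ, Real.exp (c * x) = (fun y => Real.exp (-(c * y))) (-x) := by
    intro x; simp [neg_mul_neg]
  calc ∫ x in Iic d, Real.exp (c * x)
      = ∫ x in Iic d, (fun y => Real.exp (-(c * y))) (-x) := by simp_rw [← h]
    _ = ∫ x in Ioi (-d), Real.exp (-(c * x)) := integral_comp_neg_Iic d (fun y => Real.exp (-(c * y)))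
    _ = Real.exp (c * d) / c := by rw [int_exp_Ioi hc]; ring_nf

lemma aux_nonneg (a b t : ℝ) (ha : 0 < a) (hb : 0 < b) (hab : a ≠ b) (ht : 0 ≤ t) :
    ∫ x : ℝ, Real.exp (-(a * |x|) - b * |x - t|) =
      2 * a / (a ^ 2 - b ^ 2) * Real.exp (-(b * t)) -
      2 * b / (a ^ 2 - b ^ 2) * Real.exp (-(a * t)) := by
  set f : ℝ → ℝ := fun x => Real.exp (-(a * |x|) - b * |x - t|) with hf
  have hcont : Continuous f := by fun_prop
  have hapb : 0 < a + b := by linarith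
  -- piece 1 : Iic 0
  have e1 : ∀ x ∈ Iic (0:ℝ), f x = Real.exp (-(b * t)) * Real.exp ((a + b) * x) := by
    intro x hx
    simp only [mem_Iic] at hx
    show Real.exp (-(a * |x|) - b * |x - t|) = _
    rw [abs_of_nonpos hx, abs_of_nonpos (by linarith), ← Real.exp_add]
    ring_nf
  have hI1 : IntegrableOn f (Iic 0) := by
    refine (integrableOn_congr_fun e1 measurableSet_Iic).mpr ?_
    exact ((intOn_exp_Iic hapb 0).const_mul _)
  have v1 : ∫ x in Iic (0:ℝ), f x = Real.exp (-(b * t)) / (a + b) := by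
    rw [setIntegral_congr_fun measurableSet_Iic e1, integral_const_mul, int_exp_Iic hapb]
    rw [mul_zero, Real.exp_zero]
    ring
  -- piece 3 : Ioi t
  have e3 : ∀ x ∈ Ioi t, f x = Real.exp (b * t) * Real.exp (-((a + b) * x)) := by
    intro x hx
    simp only [mem_Ioi] at hx
    show Real.exp (-(a * |x|) - b * |x - t|) = _
    rw [abs_of_nonneg (by linarith), abs_of_nonneg (by linarith), ← Real.exp_add]
    ring_nf
  have hI3 : IntegrableOn f (Ioi t) := by
    refine (integrableOn_congr_fun e3 measurableSet_Ioi).mpr ?_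
    have h0 : IntegrableOn (fun x => Real.exp (b * t) * Real.exp (-(a + b) * x)) (Ioi t) :=
      (exp_neg_integrableOn_Ioi t hapb).const_mul (Real.exp (b * t))
    exact h0.congr_fun (fun x _ => by simp only [neg_mul]) measurableSet_Ioi
  have v3 : ∫ x in Ioi t, f x = Real.exp (-(a * t)) / (a + b) := by
    rw [setIntegral_congr_fun measurableSet_Ioi e3, integral_const_mul, int_exp_Ioi hapb]
    have hkey : Real.exp (b * t) * Real.exp (-((a + b) * t)) = Real.exp (-(a * t)) := by
      rw [← Real.exp_add]; ring_nf
    rw [← mul_div_assoc, hkey]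
  -- piece 2 : Ioc 0 t
  have hI2 : IntegrableOn f (Ioc 0 t) := hcont.integrableOn_Ioc
  have v2 : ∫ x in Ioc (0:ℝ) t, f x =
      (Real.exp (-(a * t)) - Real.exp (-(b * t))) / (b - a) := by
    have e2 : ∀ x ∈ Ioc (0:ℝ) t, f x = Real.exp (-(b * t)) * Real.exp ((b - a) * x) := by
      intro x hx
      obtain ⟨h1, h2⟩ := hx
      show Real.exp (-(a * |x|) - b * |x - t|) = _
      rw [abs_of_nonneg h1.le, abs_of_nonpos (by linarith), ← Real.exp_add]
      ring_nf
    rw [setIntegral_congr_fun measurableSet_Ioc e2, ← intervalIntegral.integral_of_le ht,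
      intervalIntegral.integral_const_mul]
    have hba : b - a ≠ 0 := sub_ne_zero.mpr (Ne.symm hab)
    rw [intervalIntegral.integral_comp_mul_left (fun y => Real.exp y) hba]
    rw [integral_exp, mul_zero, Real.exp_zero, smul_eq_mul]
    have key : Real.exp (-(b * t)) * (Real.exp ((b - a) * t) - 1) =
        Real.exp (-(a * t)) - Real.exp (-(b * t)) := by
      rw [mul_sub, mul_one, ← Real.exp_add]; ring_nf
    field_simp
    rw [mul_comm (b - a) t, mul_comm a t] at key
    nlinarith [key]
  -- combine
  have hsplit : Ioc (0:ℝ) t ∪ Ioi t = Ioi 0 := Ioc_union_Ioi_eq_Ioi ht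
  have hIoi : IntegrableOn f (Ioi 0) := by
    rw [← hsplit]; exact hI2.union hI3
  have vIoi : ∫ x in Ioi (0:ℝ), f x =
      (Real.exp (-(a * t)) - Real.exp (-(b * t))) / (b - a) +
        Real.exp (-(a * t)) / (a + b) := by
    rw [← hsplit, setIntegral_union (Ioc_disjoint_Ioi le_rfl) measurableSet_Ioi hI2 hI3, v2, v3]
  have := intervalIntegral.integral_Iic_add_Ioi (b := (0:ℝ)) (μ := volume) hI1 hIoi
  rw [← this, v1, vIoi]
  have h1 : a + b ≠ 0 := ne_of_gt hapb
  have h2 : b - a ≠ 0 := sub_ne_zero.mpr (Ne.symm hab)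
  have h3 : a ^ 2 - b ^ 2 ≠ 0 := by
    intro h
    apply hab
    have : (a - b) * (a + b) = 0 := by ring_nf; linarith [h]
    rcases mul_eq_zero.mp this with h' | h'
    · linarith [sub_eq_zero.mp h']
    · exact absurd h' h1
  field_simp
  ring

/-- Normalization constant of the Adaptive Transfer Lasso prior:
`∫ exp(−λv|β| − ηw|β−β̃|) dβ
  = (2λv/((λv)²−(ηw)²)) exp(−ηw|β̃|) − (2ηw/((λv)²−(ηw)²)) exp(−λv|β̃|)`. -/
theorem stmt_13 (lam eta v w βt : ℝ) (hlam : 0 < lam) (heta : 0 < eta)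
    (hv : 0 < v) (hw : 0 < w) (hne : lam * v ≠ eta * w) :
    ∫ β : ℝ, Real.exp (-(lam * v * |β|) - eta * w * |β - βt|) =
      (2 * (lam * v) / ((lam * v) ^ 2 - (eta * w) ^ 2)) * Real.exp (-(eta * w * |βt|)) -
      (2 * (eta * w) / ((lam * v) ^ 2 - (eta * w) ^ 2)) * Real.exp (-(lam * v * |βt|)) := by
  have hA : 0 < lam * v := mul_pos hlam hv
  have hB : 0 < eta * w := mul_pos heta hw
  rcases le_or_gt 0 βt with h | h
  · rw [aux_nonneg (lam * v) (eta * w) βt hA hB hne h, abs_of_nonneg h]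
  · have h' : 0 ≤ -βt := by linarith
    have heq : (∫ β : ℝ, Real.exp (-(lam * v * |β|) - eta * w * |β - βt|)) =
        ∫ β : ℝ, Real.exp (-(lam * v * |β|) - eta * w * |β - (-βt)|) := by
      rw [← integral_neg_eq_self (fun y : ℝ => Real.exp (-(lam * v * |y|) - eta * w * |y - (-βt)|))]
      congr 1
      funext x
      show Real.exp (-(lam * v * |x|) - eta * w * |x - βt|) =
        Real.exp (-(lam * v * |(-x)|) - eta * w * |(-x) - (-βt)|)
      rw [abs_neg, show -x - -βt = -(x - βt) by ring, abs_neg]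
    rw [heq, aux_nonneg (lam * v) (eta * w) (-βt) hA hB hne h', abs_of_neg h]
end

section
/- Let Cₙ → C entrywise where each Cₙ and C is a p×p symmetric positive semidefinite matrix and C is positive definite, let wₙ → w in ℝ^p, λₙ → λ₀ ≥ 0. Define Vₙ(u) = uᵀCₙu − 2uᵀwₙ + λₙΣⱼ|uⱼ| and V(u) = uᵀCu − 2uᵀw + λ₀Σⱼ|uⱼ|. Then Vₙ converges to V uniformly on every compact subset of ℝ^p, and argmin Vₙ → argmin V. -/
open Matrix

section Stmt17AuxSec
open Filter Topology

namespace Stmt17Aux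
variable {p : ℕ}

lemma cont_quad (A : Matrix (Fin p) (Fin p) ℝ) :
    Continuous fun u : Fin p → ℝ => u ⬝ᵥ A.mulVec u := by
  simp only [dotProduct, Matrix.mulVec]
  fun_prop

lemma cont_dot (w : Fin p → ℝ) : Continuous fun u : Fin p → ℝ => u ⬝ᵥ w := by
  simp only [dotProduct]; fun_prop

lemma cont_abs_sum : Continuous fun u : Fin p → ℝ => ∑ j, |u j| := by fun_prop

lemma abs_dot_le (u v : Fin p → ℝ) : |u ⬝ᵥ v| ≤ p * ‖u‖ * ‖v‖ := by
  calc |u ⬝ᵥ v| ≤ ∑ i, |u i * v i| := Finset.abs_sum_le_sum_abs _ _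
    _ ≤ ∑ _i : Fin p, ‖u‖ * ‖v‖ := by
        refine Finset.sum_le_sum fun i _ => ?_
        rw [abs_mul]
        exact mul_le_mul (norm_le_pi_norm u i) (norm_le_pi_norm v i) (abs_nonneg _) (norm_nonneg _)
    _ = p * ‖u‖ * ‖v‖ := by simp [mul_assoc]

lemma sum_abs_le (u : Fin p → ℝ) : ∑ j, |u j| ≤ p * ‖u‖ := by
  calc ∑ j, |u j| ≤ ∑ _j : Fin p, ‖u‖ := Finset.sum_le_sum fun j _ => norm_le_pi_norm u j
    _ = p * ‖u‖ := by simp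

lemma quad_abs_le (A : Matrix (Fin p) (Fin p) ℝ) (u : Fin p → ℝ) :
    |u ⬝ᵥ A.mulVec u| ≤ (∑ i, ∑ j, |A i j|) * ‖u‖ ^ 2 := by
  have expand : u ⬝ᵥ A.mulVec u = ∑ i, ∑ j, u i * (A i j * u j) := by
    simp [dotProduct, Matrix.mulVec, Finset.mul_sum]
  rw [expand]
  calc |∑ i, ∑ j, u i * (A i j * u j)| ≤ ∑ i, |∑ j, u i * (A i j * u j)| :=
        Finset.abs_sum_le_sum_abs _ _
    _ ≤ ∑ i, ∑ j, |u i * (A i j * u j)| :=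
        Finset.sum_le_sum fun i _ => Finset.abs_sum_le_sum_abs _ _
    _ ≤ ∑ i, ∑ j, |A i j| * ‖u‖ ^ 2 := by
        refine Finset.sum_le_sum fun i _ => Finset.sum_le_sum fun j _ => ?_
        rw [abs_mul, abs_mul]
        have hi := norm_le_pi_norm u i
        have hj := norm_le_pi_norm u j
        have : |u i| * (|A i j| * |u j|) = |A i j| * (|u i| * |u j|) := by ring
        rw [this, pow_two]
        exact mul_le_mul_of_nonneg_left
          (mul_le_mul hi hj (abs_nonneg _) (norm_nonneg _)) (abs_nonneg _)
    _ = (∑ i, ∑ j, |A i j|) * ‖u‖ ^ 2 := by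
        rw [Finset.sum_mul]
        exact Finset.sum_congr rfl fun i _ => (Finset.sum_mul _ _ _).symm

lemma quad_smul (A : Matrix (Fin p) (Fin p) ℝ) (c : ℝ) (u : Fin p → ℝ) :
    (c • u) ⬝ᵥ A.mulVec (c • u) = c ^ 2 * (u ⬝ᵥ A.mulVec u) := by
  rw [Matrix.mulVec_smul, dotProduct_smul, smul_dotProduct]
  simp [smul_eq_mul]; ring

lemma quad_lower {C : Matrix (Fin p) (Fin p) ℝ} (hC : C.PosDef) :
    ∃ m > 0, ∀ u : Fin p → ℝ, m * ‖u‖ ^ 2 ≤ u ⬝ᵥ C.mulVec u := by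
  rcases Nat.eq_zero_or_pos p with hp | hp
  · subst hp
    exact ⟨1, one_pos, fun u => by
      have h : u = 0 := Subsingleton.elim u 0
      rw [h, norm_zero, zero_dotProduct]
      norm_num⟩
  · haveI : Nontrivial (Fin p → ℝ) := by
      have : Nonempty (Fin p) := ⟨⟨0, hp⟩⟩
      infer_instance
    have hsph : (Metric.sphere (0 : Fin p → ℝ) 1).Nonempty :=
      NormedSpace.sphere_nonempty.mpr zero_le_one
    obtain ⟨v₀, hv₀mem, hv₀min'⟩ :=
      (isCompact_sphere (0 : Fin p → ℝ) 1).exists_isMinOn hsph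
        ((cont_quad C).continuousOn)
    have hv₀min : ∀ x ∈ Metric.sphere (0 : Fin p → ℝ) 1,
        v₀ ⬝ᵥ C.mulVec v₀ ≤ x ⬝ᵥ C.mulVec x := fun x hx => hv₀min' hx
    have hv₀ : v₀ ≠ 0 := by
      intro h
      rw [h] at hv₀mem
      simp at hv₀mem
    refine ⟨v₀ ⬝ᵥ C.mulVec v₀, hC.dotProduct_mulVec_pos hv₀ |>.trans_eq (by simp), fun u => ?_⟩
    · rcases eq_or_ne u 0 with rfl | hu
      · simp
      · have hnu : ‖u‖ ≠ 0 := norm_ne_zero_iff.mpr hu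
        have hmem : ‖u‖⁻¹ • u ∈ Metric.sphere (0 : Fin p → ℝ) 1 := by
          simp [norm_smul, abs_of_nonneg (inv_nonneg.mpr (norm_nonneg u)),
            inv_mul_cancel₀ hnu]
        have := hv₀min _ hmem
        have h2 : (‖u‖⁻¹ • u) ⬝ᵥ C.mulVec (‖u‖⁻¹ • u) = ‖u‖⁻¹ ^ 2 * (u ⬝ᵥ C.mulVec u) :=
          quad_smul C _ u
        rw [h2] at this
        have h3 : ‖u‖ ^ 2 * (v₀ ⬝ᵥ C.mulVec v₀) ≤ ‖u‖ ^ 2 * (‖u‖⁻¹ ^ 2 * (u ⬝ᵥ C.mulVec u)) :=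
          mul_le_mul_of_nonneg_left this (sq_nonneg _)
        calc (v₀ ⬝ᵥ C.mulVec v₀) * ‖u‖ ^ 2 = ‖u‖ ^ 2 * (v₀ ⬝ᵥ C.mulVec v₀) := by ring
          _ ≤ ‖u‖ ^ 2 * (‖u‖⁻¹ ^ 2 * (u ⬝ᵥ C.mulVec u)) := h3
          _ = (u ⬝ᵥ C.mulVec u) := by field_simp

end Stmt17Aux

end Stmt17AuxSec

open Filter Topology in
set_option maxHeartbeats 1000000 in

/-- Deterministic core of the argmin-convergence arguments: if `Cₙ → C` entrywise
(`Cₙ` symmetric PSD, `C` PD), `wₙ → w`, `λₙ → λ₀ ≥ 0`, then the convex objectives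
`Vₙ` converge to `V` uniformly on compacts, `V` has a unique minimizer `u*`, and
any sequence of minimizers of `Vₙ` converges to `u*`. -/
theorem stmt_17 (p : ℕ) (Cseq : ℕ → Matrix (Fin p) (Fin p) ℝ) (C : Matrix (Fin p) (Fin p) ℝ)
    (hCseq : ∀ n, (Cseq n).IsSymm ∧ (Cseq n).PosSemidef)
    (hCsymm : C.IsSymm) (hCpd : C.PosDef)
    (hCconv : ∀ i j, Filter.Tendsto (fun n => Cseq n i j) Filter.atTop (nhds (C i j)))
    (wseq : ℕ → Fin p → ℝ) (w : Fin p → ℝ)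
    (hwconv : Filter.Tendsto wseq Filter.atTop (nhds w))
    (lamseq : ℕ → ℝ) (lam0 : ℝ) (hlam0 : 0 ≤ lam0)
    (hlamconv : Filter.Tendsto lamseq Filter.atTop (nhds lam0))
    (Vn : ℕ → (Fin p → ℝ) → ℝ) (V : (Fin p → ℝ) → ℝ)
    (hVn : ∀ n u, Vn n u = u ⬝ᵥ (Cseq n).mulVec u - 2 * (u ⬝ᵥ wseq n)
        + lamseq n * ∑ j, |u j|)
    (hV : ∀ u, V u = u ⬝ᵥ C.mulVec u - 2 * (u ⬝ᵥ w) + lam0 * ∑ j, |u j|) :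
    (∀ K : Set (Fin p → ℝ), IsCompact K → TendstoUniformlyOn Vn V Filter.atTop K) ∧
    ∃ ustar : Fin p → ℝ, (∀ v, V ustar ≤ V v) ∧ (∀ u, (∀ v, V u ≤ V v) → u = ustar) ∧
      ∀ useq : ℕ → (Fin p → ℝ), (∀ n v, Vn n (useq n) ≤ Vn n v) →
        Filter.Tendsto useq Filter.atTop (nhds ustar) := by
  obtain ⟨m, hm, hmq⟩ := Stmt17Aux.quad_lower hCpd
  set d : ℕ → ℝ := fun n => ∑ i, ∑ j, |Cseq n i j - C i j| with hd
  have hdnn : ∀ n, 0 ≤ d n := fun n =>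
    Finset.sum_nonneg fun i _ => Finset.sum_nonneg fun j _ => abs_nonneg _
  have hdconv : Tendsto d atTop (nhds 0) := by
    have h : Tendsto (fun n => ∑ i : Fin p, ∑ j : Fin p, |Cseq n i j - C i j|) atTop
        (nhds (∑ _i : Fin p, ∑ _j : Fin p, (0:ℝ))) := by
      refine tendsto_finset_sum _ fun i _ => tendsto_finset_sum _ fun j _ => ?_
      have h1 := (hCconv i j).sub (tendsto_const_nhds (x := C i j))
      simpa using h1.abs
    simpa using h
  have heconv : Tendsto (fun n => ‖wseq n - w‖) atTop (nhds 0) := by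
    rw [← tendsto_iff_norm_sub_tendsto_zero]
    exact hwconv
  have hlconv : Tendsto (fun n => |lamseq n - lam0|) atTop (nhds 0) := by
    have h1 := hlamconv.sub (tendsto_const_nhds (x := lam0))
    simpa using h1.abs
  -- key pointwise bound on |Vn n u - V u|
  have key : ∀ n u, |Vn n u - V u| ≤
      d n * ‖u‖ ^ 2 + 2 * ((p : ℝ) * ‖u‖ * ‖wseq n - w‖) + |lamseq n - lam0| * ((p : ℝ) * ‖u‖) := by
    intro n u
    have h1 : Vn n u - V u = (u ⬝ᵥ (Cseq n - C).mulVec u) - 2 * (u ⬝ᵥ (wseq n - w))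
        + (lamseq n - lam0) * ∑ j, |u j| := by
      rw [hVn, hV]
      simp only [Matrix.sub_mulVec, dotProduct_sub]
      ring
    rw [h1]
    have b1 : |u ⬝ᵥ (Cseq n - C).mulVec u| ≤ d n * ‖u‖ ^ 2 := by
      have h2 := Stmt17Aux.quad_abs_le (Cseq n - C) u
      simpa [hd, Matrix.sub_apply] using h2
    have b2 : |u ⬝ᵥ (wseq n - w)| ≤ (p : ℝ) * ‖u‖ * ‖wseq n - w‖ :=
      Stmt17Aux.abs_dot_le u (wseq n - w)
    have b3 : abs ((lamseq n - lam0) * ∑ j, |u j|) ≤ |lamseq n - lam0| * ((p : ℝ) * ‖u‖) := by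
      rw [abs_mul]
      refine mul_le_mul_of_nonneg_left ?_ (abs_nonneg _)
      rw [abs_of_nonneg (Finset.sum_nonneg fun j _ => abs_nonneg _)]
      exact Stmt17Aux.sum_abs_le u
    calc abs ((u ⬝ᵥ (Cseq n - C).mulVec u) - 2 * (u ⬝ᵥ (wseq n - w))
          + (lamseq n - lam0) * ∑ j, |u j|)
        ≤ |(u ⬝ᵥ (Cseq n - C).mulVec u) - 2 * (u ⬝ᵥ (wseq n - w))|
          + abs ((lamseq n - lam0) * ∑ j, |u j|) := abs_add_le _ _
      _ ≤ |u ⬝ᵥ (Cseq n - C).mulVec u| + |2 * (u ⬝ᵥ (wseq n - w))|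
          + abs ((lamseq n - lam0) * ∑ j, |u j|) := by
          have := abs_sub (u ⬝ᵥ (Cseq n - C).mulVec u) (2 * (u ⬝ᵥ (wseq n - w)))
          linarith
      _ ≤ d n * ‖u‖ ^ 2 + 2 * ((p : ℝ) * ‖u‖ * ‖wseq n - w‖)
          + |lamseq n - lam0| * ((p : ℝ) * ‖u‖) := by
          rw [abs_mul, abs_two]
          have := mul_le_mul_of_nonneg_left b2 (by norm_num : (0:ℝ) ≤ 2)
          linarith
  -- Part 1 : uniform convergence on compacts
  have part1 : ∀ K : Set (Fin p → ℝ), IsCompact K → TendstoUniformlyOn Vn V atTop K := by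
    intro K hK
    obtain ⟨M₀, hM₀⟩ := (Metric.isBounded_iff_subset_closedBall (0 : Fin p → ℝ)).mp hK.isBounded
    set M := max M₀ 0 with hM
    have hMK : ∀ x ∈ K, ‖x‖ ≤ M := by
      intro x hx
      have := hM₀ hx
      rw [Metric.mem_closedBall, dist_zero_right] at this
      exact this.trans (le_max_left _ _)
    have hM0 : (0:ℝ) ≤ M := le_max_right _ _
    rw [Metric.tendstoUniformlyOn_iff]
    intro ε hε
    have hb : Tendsto (fun n => d n * M ^ 2 + 2 * ((p : ℝ) * M * ‖wseq n - w‖)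
        + |lamseq n - lam0| * ((p : ℝ) * M)) atTop (nhds 0) := by
      have h1 := (hdconv.mul_const (M ^ 2)).add
        ((heconv.const_mul ((p : ℝ) * M)).const_mul 2) |>.add (hlconv.mul_const ((p : ℝ) * M))
      simpa using h1
    filter_upwards [hb.eventually_lt_const hε] with n hn x hx
    rw [Real.dist_eq, abs_sub_comm]
    refine lt_of_le_of_lt ?_ hn
    have hxM := hMK x hx
    have hx0 := norm_nonneg x
    have h1 := key n x
    have t1 : d n * ‖x‖ ^ 2 ≤ d n * M ^ 2 :=
      mul_le_mul_of_nonneg_left (by nlinarith) (hdnn n)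
    have t2 : (p : ℝ) * ‖x‖ * ‖wseq n - w‖ ≤ (p : ℝ) * M * ‖wseq n - w‖ := by
      have : (p : ℝ) * ‖x‖ ≤ (p : ℝ) * M :=
        mul_le_mul_of_nonneg_left hxM (Nat.cast_nonneg p)
      exact mul_le_mul_of_nonneg_right this (norm_nonneg _)
    have t3 : |lamseq n - lam0| * ((p : ℝ) * ‖x‖) ≤ |lamseq n - lam0| * ((p : ℝ) * M) :=
      mul_le_mul_of_nonneg_left
        (mul_le_mul_of_nonneg_left hxM (Nat.cast_nonneg p)) (abs_nonneg _)
    linarith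
  refine ⟨part1, ?_⟩
  -- continuity and coercivity of V
  have hVeq : V = fun u => u ⬝ᵥ C.mulVec u - 2 * (u ⬝ᵥ w) + lam0 * ∑ j, |u j| := funext hV
  have hVcont : Continuous V := by
    rw [hVeq]
    exact ((Stmt17Aux.cont_quad C).sub
      (continuous_const.mul (Stmt17Aux.cont_dot w))).add
      (continuous_const.mul Stmt17Aux.cont_abs_sum)
  have hVlb : ∀ u, m * ‖u‖ ^ 2 - (2 * (p : ℝ) * ‖w‖) * ‖u‖ ≤ V u := by
    intro u
    rw [hV]
    have h1 := hmq u
    have h2 := abs_le.mp (Stmt17Aux.abs_dot_le u w)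
    have h3 : 0 ≤ lam0 * ∑ j, |u j| :=
      mul_nonneg hlam0 (Finset.sum_nonneg fun j _ => abs_nonneg _)
    nlinarith [h2.2]
  have hcoer : Tendsto V (cocompact (Fin p → ℝ)) atTop := by
    refine tendsto_atTop_mono hVlb ?_
    have hpoly : Tendsto (fun t : ℝ => m * t ^ 2 - (2 * (p : ℝ) * ‖w‖) * t) atTop atTop := by
      have heq : (fun t : ℝ => m * t ^ 2 - (2 * (p : ℝ) * ‖w‖) * t)
          = fun t => t * (m * t - 2 * (p : ℝ) * ‖w‖) := by funext t; ring
      rw [heq]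
      refine Tendsto.atTop_mul_atTop₀ tendsto_id ?_
      exact tendsto_atTop_add_const_right _ _ (Tendsto.const_mul_atTop hm tendsto_id)
    exact hpoly.comp tendsto_norm_cocompact_atTop
  obtain ⟨ustar, hustar⟩ := hVcont.exists_forall_le hcoer
  -- strict midpoint convexity
  have hmid : ∀ x y : Fin p → ℝ, x ≠ y →
      V ((2:ℝ)⁻¹ • (x + y)) < (V x + V y) / 2 := by
    intro x y hxy
    have hq : (x + y) ⬝ᵥ C.mulVec (x + y) + (x - y) ⬝ᵥ C.mulVec (x - y)
        = 2 * (x ⬝ᵥ C.mulVec x) + 2 * (y ⬝ᵥ C.mulVec y) := by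
      simp only [Matrix.mulVec_add, Matrix.mulVec_sub, dotProduct_add,
        dotProduct_sub, add_dotProduct, sub_dotProduct]
      ring
    have hqm : ((2:ℝ)⁻¹ • (x + y)) ⬝ᵥ C.mulVec ((2:ℝ)⁻¹ • (x + y))
        = ((2:ℝ)⁻¹) ^ 2 * ((x + y) ⬝ᵥ C.mulVec (x + y)) := Stmt17Aux.quad_smul C _ _
    have hdot : ((2:ℝ)⁻¹ • (x + y)) ⬝ᵥ w = (2:ℝ)⁻¹ * (x ⬝ᵥ w + y ⬝ᵥ w) := by
      rw [smul_dotProduct, add_dotProduct]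
      simp [smul_eq_mul]
    have habs : ∑ j, |((2:ℝ)⁻¹ • (x + y)) j| ≤ (2:ℝ)⁻¹ * (∑ j, |x j| + ∑ j, |y j|) := by
      rw [← Finset.sum_add_distrib, Finset.mul_sum]
      refine Finset.sum_le_sum fun j _ => ?_
      simp only [Pi.smul_apply, Pi.add_apply, smul_eq_mul]
      rw [abs_mul]
      have : |((2:ℝ)⁻¹)| = (2:ℝ)⁻¹ := by norm_num
      rw [this]
      exact mul_le_mul_of_nonneg_left (abs_add_le _ _) (by norm_num)
    have hpos : 0 < (x - y) ⬝ᵥ C.mulVec (x - y) := by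
      have h := hCpd.dotProduct_mulVec_pos (sub_ne_zero.mpr hxy)
      simpa using h
    have hlabs : lam0 * ∑ j, |((2:ℝ)⁻¹ • (x + y)) j|
        ≤ lam0 * ((2:ℝ)⁻¹ * (∑ j, |x j| + ∑ j, |y j|)) :=
      mul_le_mul_of_nonneg_left habs hlam0
    rw [hV, hV, hV, hqm, hdot]
    nlinarith [hq, hpos, hlabs]
  have huniq : ∀ u, (∀ v, V u ≤ V v) → u = ustar := by
    intro u hu
    by_contra hne
    have h := hmid u ustar hne
    have h1 := hustar ((2:ℝ)⁻¹ • (u + ustar))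
    have h2 := hu ustar
    have h3 := hustar u
    linarith
  refine ⟨ustar, hustar, huniq, ?_⟩
  -- argmin convergence
  intro useq husq
  have hVn0 : ∀ n, Vn n 0 = 0 := fun n => by simp [hVn]
  set c : ℝ := (p : ℝ) * (2 * (‖w‖ + 1) + (lam0 + 1)) with hc
  have hc0 : 0 ≤ c := by
    have := norm_nonneg w
    have := (by positivity : (0:ℝ) ≤ (p:ℝ))
    positivity
  set R : ℝ := 2 * c / m with hR
  have hR0 : 0 ≤ R := div_nonneg (by linarith) hm.le
  have hRev : ∀ᶠ n in atTop, ‖useq n‖ ≤ R := by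
    have hev1 : ∀ᶠ n in atTop, d n < m / 2 := hdconv.eventually_lt_const (half_pos hm)
    have hev2 : ∀ᶠ n in atTop, ‖wseq n‖ < ‖w‖ + 1 :=
      hwconv.norm.eventually_lt_const (lt_add_one _)
    have hev3 : ∀ᶠ n in atTop, |lamseq n| < lam0 + 1 := by
      have habs : Tendsto (fun n => |lamseq n|) atTop (nhds |lam0|) := hlamconv.abs
      exact habs.eventually_lt_const (by rw [abs_of_nonneg hlam0]; exact lt_add_one _)
    filter_upwards [hev1, hev2, hev3] with n h1 h2 h3
    set u := useq n with hu
    set t := ‖u‖ with ht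
    have ht0 : 0 ≤ t := norm_nonneg u
    -- lower bound on Vn n u
    have hb1 : u ⬝ᵥ (Cseq n).mulVec u ≥ m * t ^ 2 - d n * t ^ 2 := by
      have hq := hmq u
      have hdiff : |u ⬝ᵥ (Cseq n).mulVec u - u ⬝ᵥ C.mulVec u| ≤ d n * t ^ 2 := by
        have h4 : u ⬝ᵥ (Cseq n).mulVec u - u ⬝ᵥ C.mulVec u = u ⬝ᵥ (Cseq n - C).mulVec u := by
          simp [Matrix.sub_mulVec, dotProduct_sub]
        rw [h4]
        have h5 := Stmt17Aux.quad_abs_le (Cseq n - C) u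
        simpa [hd, Matrix.sub_apply] using h5
      have := abs_le.mp hdiff
      linarith [this.1]
    have hb2 : |u ⬝ᵥ wseq n| ≤ (p : ℝ) * t * ‖wseq n‖ := Stmt17Aux.abs_dot_le u (wseq n)
    have hSnn : 0 ≤ ∑ j, |u j| := Finset.sum_nonneg fun j _ => abs_nonneg _
    have hS : ∑ j, |u j| ≤ (p : ℝ) * t := Stmt17Aux.sum_abs_le u
    have hb3 : lamseq n * ∑ j, |u j| ≥ -(|lamseq n| * ((p : ℝ) * t)) := by
      have h4 : -(|lamseq n|) * ∑ j, |u j| ≤ lamseq n * ∑ j, |u j| :=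
        mul_le_mul_of_nonneg_right (neg_abs_le _) hSnn
      have h5 : |lamseq n| * ∑ j, |u j| ≤ |lamseq n| * ((p : ℝ) * t) :=
        mul_le_mul_of_nonneg_left hS (abs_nonneg _)
      linarith
    have hmin := husq n 0
    rw [hVn0] at hmin
    rw [hVn] at hmin
    -- hmin : u ⬝ᵥ Cn u - 2 (u ⬝ᵥ wn) + λn Σ ≤ 0
    have habs2 := abs_le.mp hb2
    have hp0 : (0:ℝ) ≤ (p : ℝ) := Nat.cast_nonneg p
    have hw1 : ‖wseq n‖ ≤ ‖w‖ + 1 := h2.le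
    have hl1 : |lamseq n| ≤ lam0 + 1 := h3.le
    have hquad : m / 2 * t ^ 2 - c * t ≤ 0 := by
      have e1 : (p:ℝ) * t * ‖wseq n‖ ≤ (p:ℝ) * t * (‖w‖ + 1) :=
        mul_le_mul_of_nonneg_left hw1 (by positivity)
      have e2 : |lamseq n| * ((p:ℝ) * t) ≤ (lam0 + 1) * ((p:ℝ) * t) :=
        mul_le_mul_of_nonneg_right hl1 (by positivity)
      nlinarith [habs2.2]
    -- conclude t ≤ R
    by_contra hcon
    push_neg at hcon
    have h6 : 0 < t := lt_of_le_of_lt hR0 hcon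
    have h7 : m * t > 2 * c := by
      have := (div_lt_iff₀ hm).mp (by rw [hR] at hcon; linarith [hcon] : 2 * c / m < t)
      linarith
    nlinarith
  rw [Metric.tendsto_nhds]
  intro ε hε
  set B := Metric.closedBall (0 : Fin p → ℝ) (R + ‖ustar‖ + 1) with hB
  have hBc : IsCompact B := isCompact_closedBall _ _
  have hustarB : ustar ∈ B := by
    rw [Metric.mem_closedBall, dist_zero_right]
    linarith [hR0]
  have hgap : ∃ δ > 0, ∀ v ∈ B, ε ≤ dist v ustar → V ustar + δ ≤ V v := by
    set S := B ∩ {v | ε ≤ dist v ustar} with hS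
    rcases S.eq_empty_or_nonempty with hSe | hSne
    · refine ⟨1, one_pos, fun v hv hd' => absurd ?_ (Set.not_nonempty_iff_eq_empty.mpr hSe)⟩
      exact ⟨v, hv, hd'⟩
    · have hScl : IsClosed {v : Fin p → ℝ | ε ≤ dist v ustar} :=
        isClosed_le continuous_const (continuous_id.dist continuous_const)
      have hScomp : IsCompact S := hBc.inter_right hScl
      obtain ⟨v₀, hv₀S, hv₀min⟩ := hScomp.exists_isMinOn hSne hVcont.continuousOn
      have hlt : V ustar < V v₀ := by
        rcases lt_or_eq_of_le (hustar v₀) with h | h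
        · exact h
        · exfalso
          have hglob : ∀ v, V v₀ ≤ V v := fun v => h ▸ hustar v
          have := huniq v₀ hglob
          have hd0 : ε ≤ dist v₀ ustar := hv₀S.2
          rw [this] at hd0
          simp at hd0
          linarith
      refine ⟨V v₀ - V ustar, by linarith, fun v hv hd' => ?_⟩
      have : V v₀ ≤ V v := hv₀min ⟨hv, hd'⟩
      linarith
  obtain ⟨δ, hδ, hgap'⟩ := hgap
  have hunif := part1 B hBc
  rw [Metric.tendstoUniformlyOn_iff] at hunif
  filter_upwards [hunif (δ / 3) (by positivity), hRev] with n hn hRn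
  by_contra hcon
  push_neg at hcon
  have huB : useq n ∈ B := by
    rw [Metric.mem_closedBall, dist_zero_right]
    linarith [norm_nonneg ustar]
  have h1 := hgap' (useq n) huB hcon
  have h2 := hn (useq n) huB
  have h3 := hn ustar hustarB
  have h4 := husq n ustar
  rw [Real.dist_eq] at h2 h3
  have h2' := abs_lt.mp h2
  have h3' := abs_lt.mp h3
  linarith [h2'.1, h2'.2, h3'.1, h3'.2]
end
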